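/- arXiv:2408.11177 — 2 statements merged into one kernel-verified Lean document; each statement's English description precedes it below -/
import Mathlib

section
/- Assume J̄ < ∞ and let ν > 0. Then I_ν = 0 if and only if the Gagliardo–Nirenberg-type inequality Σ_n |q_n|^{p+1} ≤ ((p+1)/2) ν^{−(p−1)/2} M[q]^{(p−1)/2} ⟨Lq,q⟩ holds for every q ∈ ℓ²(Z^d). -/
open scoped BigOperators
open Filter Topology

noncomputable section

/-- The `ℓ^∞` norm of a lattice point of `ℤ^d`, as a natural number. -/
def latNorm {d : ℕ} (m : Fin d → ℤ) : ℕ := Finset.univ.sup fun i => (m i).natAbs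

/-- The summand `J_{|m|}` for `m ≠ 0` (and `0` for `m = 0`). -/
def JbarSummand (d : ℕ) (J : ℕ → ℝ) (m : Fin d → ℤ) : ℝ :=
  if m = 0 then 0 else J (latNorm m)

/-- `J̄ = Σ_{m ≠ 0} J_{|m|}`. -/
def Jbar (d : ℕ) (J : ℕ → ℝ) : ℝ := ∑' m : Fin d → ℤ, JbarSummand d J m

/-- The quadratic form `⟨Lu,u⟩ = (1/2) Σ_n Σ_{m ≠ n} J_{|n-m|} |u_n - u_m|²`. -/
def pairing (d : ℕ) (J : ℕ → ℝ) (u : (Fin d → ℤ) → ℂ) : ℝ :=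
  (1/2) * ∑' n : Fin d → ℤ, ∑' m : Fin d → ℤ,
    if m = n then 0 else J (latNorm (n - m)) * ‖u n - u m‖ ^ 2

/-- The mass `M[u] = Σ_n |u_n|²`. -/
def mass (d : ℕ) (u : (Fin d → ℤ) → ℂ) : ℝ := ∑' n : Fin d → ℤ, ‖u n‖ ^ 2

/-- Membership in `ℓ²(ℤ^d)`. -/
def MemL2 (d : ℕ) (u : (Fin d → ℤ) → ℂ) : Prop := Summable fun n : Fin d → ℤ => ‖u n‖ ^ 2

/-- The potential term `Σ_n |u_n|^{p+1}`. -/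
def ppot (d : ℕ) (p : ℝ) (u : (Fin d → ℤ) → ℂ) : ℝ := ∑' n : Fin d → ℤ, ‖u n‖ ^ (p + 1)

/-- The energy `H[u] = (1/2)⟨Lu,u⟩ - (1/(p+1)) Σ_n |u_n|^{p+1}`. -/
def energy (d : ℕ) (J : ℕ → ℝ) (p : ℝ) (u : (Fin d → ℤ) → ℂ) : ℝ :=
  (1/2) * pairing d J u - (1/(p+1)) * ppot d p u

/-- `I_ν = inf {H[q] : q ∈ ℓ², M[q] = ν}`. -/
def Ifun (d : ℕ) (J : ℕ → ℝ) (p : ℝ) (ν : ℝ) : ℝ :=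
  sInf {x : ℝ | ∃ q, MemL2 d q ∧ mass d q = ν ∧ energy d J p q = x}

section Helpers

variable {d : ℕ} {J : ℕ → ℝ} {p : ℝ}

lemma jbarSummand_nonneg (hJpos : ∀ k, 0 ≤ J k) (m : Fin d → ℤ) :
    0 ≤ JbarSummand d J m := by
  unfold JbarSummand; split_ifs
  · exact le_rfl
  · exact hJpos _

lemma jbar_nonneg (hJpos : ∀ k, 0 ≤ J k) : 0 ≤ Jbar d J :=
  tsum_nonneg (jbarSummand_nonneg hJpos)

lemma pairing_nonneg (hJpos : ∀ k, 0 ≤ J k) (u : (Fin d → ℤ) → ℂ) :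
    0 ≤ pairing d J u := by
  unfold pairing
  apply mul_nonneg (by norm_num)
  refine tsum_nonneg fun n => tsum_nonneg fun m => ?_
  split_ifs
  · exact le_refl 0
  · exact mul_nonneg (hJpos _) (sq_nonneg _)

lemma ppot_nonneg (u : (Fin d → ℤ) → ℂ) : 0 ≤ ppot d p u :=
  tsum_nonneg fun n => Real.rpow_nonneg (norm_nonneg _) _

lemma mass_nonneg (u : (Fin d → ℤ) → ℂ) : 0 ≤ mass d u :=
  tsum_nonneg fun n => sq_nonneg _

lemma ppot_le_of_memL2 (hp : 1 < p) (q : (Fin d → ℤ) → ℂ) (hq : MemL2 d q) :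
    ppot d p q ≤ Real.sqrt (mass d q) ^ (p - 1) * mass d q := by
  have hbd : ∀ n, ‖q n‖ ≤ Real.sqrt (mass d q) := by
    intro n
    rw [show ‖q n‖ = Real.sqrt (‖q n‖ ^ 2) by rw [Real.sqrt_sq (norm_nonneg _)]]
    exact Real.sqrt_le_sqrt (Summable.le_tsum hq n fun j _ => sq_nonneg _)
  have hterm : ∀ n, ‖q n‖ ^ (p + 1) ≤ Real.sqrt (mass d q) ^ (p - 1) * ‖q n‖ ^ 2 := by
    intro n
    have h1 : ‖q n‖ ^ (p + 1) = ‖q n‖ ^ (p - 1) * ‖q n‖ ^ (2:ℝ) := by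
      rw [show p + 1 = (p - 1) + 2 by ring, Real.rpow_add' (norm_nonneg _) (by linarith)]
    rw [h1, Real.rpow_two]
    exact mul_le_mul (Real.rpow_le_rpow (norm_nonneg _) (hbd n) (by linarith))
      le_rfl (sq_nonneg _) (Real.rpow_nonneg (Real.sqrt_nonneg _) _)
  have hsum : Summable fun n => Real.sqrt (mass d q) ^ (p - 1) * ‖q n‖ ^ 2 :=
    hq.mul_left _
  calc ppot d p q ≤ ∑' n, Real.sqrt (mass d q) ^ (p - 1) * ‖q n‖ ^ 2 :=
        Summable.tsum_le_tsum hterm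
          (Summable.of_nonneg_of_le (fun n => Real.rpow_nonneg (norm_nonneg _) _) hterm hsum)
          hsum
    _ = Real.sqrt (mass d q) ^ (p - 1) * mass d q := tsum_mul_left

lemma energy_bddBelow (hp : 1 < p) (hJpos : ∀ k, 0 ≤ J k) (ν : ℝ) :
    BddBelow {x : ℝ | ∃ q, MemL2 d q ∧ mass d q = ν ∧ energy d J p q = x} := by
  refine ⟨-(1/(p+1)) * (Real.sqrt ν ^ (p - 1) * ν), ?_⟩
  rintro x ⟨q, hq, hm, rfl⟩
  have h1 : ppot d p q ≤ Real.sqrt ν ^ (p - 1) * ν := by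
    have := ppot_le_of_memL2 hp q hq; rwa [hm] at this
  have h2 : 0 ≤ pairing d J q := pairing_nonneg hJpos q
  have hp1 : (0:ℝ) < 1/(p+1) := by positivity
  unfold energy
  nlinarith

lemma mass_smul (c : ℝ) (hc : 0 ≤ c) (q : (Fin d → ℤ) → ℂ) :
    mass d (fun n => (c:ℂ) * q n) = c ^ 2 * mass d q := by
  unfold mass
  rw [← tsum_mul_left]
  congr 1; funext n
  rw [norm_mul, Complex.norm_real, Real.norm_eq_abs, abs_of_nonneg hc, mul_pow]

lemma memL2_smul (c : ℝ) (hc : 0 ≤ c) (q : (Fin d → ℤ) → ℂ) (hq : MemL2 d q) :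
    MemL2 d (fun n => (c:ℂ) * q n) := by
  unfold MemL2
  have : (fun n : Fin d → ℤ => ‖(c:ℂ) * q n‖ ^ 2) = fun n => c ^ 2 * ‖q n‖ ^ 2 := by
    funext n
    rw [norm_mul, Complex.norm_real, Real.norm_eq_abs, abs_of_nonneg hc, mul_pow]
  rw [this]
  exact hq.mul_left _

lemma ppot_smul (c : ℝ) (hc : 0 ≤ c) (q : (Fin d → ℤ) → ℂ) :
    ppot d p (fun n => (c:ℂ) * q n) = c ^ (p+1) * ppot d p q := by
  unfold ppot
  rw [← tsum_mul_left]
  congr 1; funext n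
  rw [norm_mul, Complex.norm_real, Real.norm_eq_abs, abs_of_nonneg hc,
    Real.mul_rpow hc (norm_nonneg _)]

lemma pairing_smul (c : ℝ) (hc : 0 ≤ c) (q : (Fin d → ℤ) → ℂ) :
    pairing d J (fun n => (c:ℂ) * q n) = c ^ 2 * pairing d J q := by
  unfold pairing
  have key : ∀ n m : Fin d → ℤ,
      (if m = n then 0 else J (latNorm (n - m)) * ‖(c:ℂ) * q n - (c:ℂ) * q m‖ ^ 2)
      = c ^ 2 * (if m = n then 0 else J (latNorm (n - m)) * ‖q n - q m‖ ^ 2) := by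
    intro n m
    split_ifs with h
    · rw [mul_zero]
    · rw [← mul_sub, norm_mul, Complex.norm_real, Real.norm_eq_abs, abs_of_nonneg hc]
      ring
  simp_rw [key, tsum_mul_left]
  ring

end Helpers
lemma pow_sub_pow_le_aux (e : ℕ) : ∀ {a b : ℝ}, 0 ≤ a → a ≤ b →
    b ^ (e + 1) - a ^ (e + 1) ≤ ((e:ℝ) + 1) * (b - a) * b ^ e := by
  induction e with
  | zero => intro a b ha hab; simp
  | succ e ih =>
    intro a b ha hab
    have hb : 0 ≤ b := ha.trans hab
    have h1 := ih ha hab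
    have h2 : a ^ (e + 1) ≤ b ^ (e + 1) := pow_le_pow_left₀ ha hab _
    have h3 : (0:ℝ) ≤ b ^ (e + 1) := pow_nonneg hb _
    have h4 := mul_le_mul_of_nonneg_left h1 hb
    have h5 : (0:ℝ) ≤ b - a := by linarith
    calc b ^ (e + 2) - a ^ (e + 2)
        = b * (b ^ (e + 1) - a ^ (e + 1)) + (b - a) * a ^ (e + 1) := by ring
      _ ≤ b * (((e:ℝ) + 1) * (b - a) * b ^ e) + (b - a) * b ^ (e + 1) := by nlinarith
      _ = ((e:ℝ) + 1 + 1) * (b - a) * b ^ (e + 1) := by ring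
      _ = ((↑(e + 1):ℝ) + 1) * (b - a) * b ^ (e + 1) := by push_cast; ring

lemma latNorm_coord_le {d : ℕ} (v : Fin d → ℤ) (i : Fin d) :
    (v i).natAbs ≤ latNorm v := by
  unfold latNorm
  exact Finset.le_sup (f := fun i => (v i).natAbs) (Finset.mem_univ i)
set_option maxHeartbeats 2000000 in
lemma exists_small_energy (d : ℕ) (hd : 1 ≤ d) (p : ℝ) (hp : 1 < p) (J : ℕ → ℝ)
    (hJpos : ∀ k, 0 ≤ J k) (hJbar : Summable (JbarSummand d J))
    (ν : ℝ) (hν : 0 < ν) {ε : ℝ} (hε : 0 < ε) :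
    ∃ q, MemL2 d q ∧ mass d q = ν ∧ energy d J p q ≤ ε := by
  classical
  have hJb : 0 ≤ Jbar d J := jbar_nonneg hJpos
  -- tail and inner summands
  set tailS : ℕ → (Fin d → ℤ) → ℝ :=
    fun K v => if latNorm v ≤ K then 0 else JbarSummand d J v with htailS
  have htail_nonneg : ∀ K v, 0 ≤ tailS K v := by
    intro K v; simp only [htailS]; split_ifs
    · exact le_rfl
    · exact jbarSummand_nonneg hJpos v
  have htail_le : ∀ K v, tailS K v ≤ JbarSummand d J v := by
    intro K v; simp only [htailS]; split_ifs
    · exact jbarSummand_nonneg hJpos v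
    · exact le_rfl
  have htail_sum : ∀ K, Summable (tailS K) :=
    fun K => Summable.of_nonneg_of_le (htail_nonneg K) (htail_le K) hJbar
  set inS : ℕ → (Fin d → ℤ) → ℝ :=
    fun K v => if latNorm v ≤ K then JbarSummand d J v else 0 with hinS
  have hin_nonneg : ∀ K v, 0 ≤ inS K v := by
    intro K v; simp only [hinS]; split_ifs
    · exact jbarSummand_nonneg hJpos v
    · exact le_rfl
  have hin_le : ∀ K v, inS K v ≤ JbarSummand d J v := by
    intro K v; simp only [hinS]; split_ifs
    · exact le_rfl
    · exact jbarSummand_nonneg hJpos v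
  have hin_sum : ∀ K, Summable (inS K) :=
    fun K => Summable.of_nonneg_of_le (hin_nonneg K) (hin_le K) hJbar
  have hsplitJ : ∀ K v, JbarSummand d J v = inS K v + tailS K v := by
    intro K v; simp only [hinS, htailS]; split_ifs <;> ring
  -- choose K with small tail
  set δ : ℝ := ε / (2 * ν) with hδ
  have hδpos : 0 < δ := by positivity
  have hHS : HasSum (JbarSummand d J) (Jbar d J) := hJbar.hasSum
  obtain ⟨F, hF⟩ : ∃ F : Finset (Fin d → ℤ),
      Jbar d J - δ < ∑ v ∈ F, JbarSummand d J v :=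
    (hHS.eventually (eventually_gt_nhds (by linarith : Jbar d J - δ < Jbar d J))).exists
  set K : ℕ := F.sup latNorm with hK
  have hTK : (∑' v, tailS K v) < δ := by
    have hsum_eq : Jbar d J = (∑' v, inS K v) + (∑' v, tailS K v) := by
      rw [Jbar, ← Summable.tsum_add (hin_sum K) (htail_sum K)]
      exact tsum_congr fun v => hsplitJ K v
    have hFin : ∑ v ∈ F, JbarSummand d J v ≤ ∑' v, inS K v := by
      have he : ∑ v ∈ F, JbarSummand d J v = ∑ v ∈ F, inS K v :=
        Finset.sum_congr rfl fun v hv => by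
          simp only [hinS]; rw [if_pos (Finset.le_sup hv)]
      rw [he]
      exact Summable.sum_le_tsum F (fun v _ => hin_nonneg K v) (hin_sum K)
    linarith
  have hTnn : 0 ≤ ∑' v, tailS K v := tsum_nonneg (htail_nonneg K)
  -- choose L
  set C : ℝ := 2 * (d:ℝ) * (K:ℝ) * ν * Jbar d J with hC
  have hC0 : 0 ≤ C := by positivity
  obtain ⟨L, hLgt⟩ := exists_nat_gt (max (max (2 * C / ε) (2 * (K:ℝ))) 1)
  have hL1R : (1:ℝ) ≤ L := ((le_max_right _ 1).trans_lt hLgt).le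
  have hLpos : (0:ℝ) < L := by linarith
  have hL1 : 1 ≤ L := by exact_mod_cast hL1R
  have h2K : 2 * K ≤ L := by
    have : (2 * (K:ℝ)) < L := ((le_max_right _ _).trans (le_max_left _ _)).trans_lt hLgt
    exact_mod_cast this.le
  have hCL : C / L ≤ ε / 2 := by
    have h1 : 2 * C / ε < L :=
      ((le_max_left _ _).trans (le_max_left _ _)).trans_lt hLgt
    have h2 : 2 * C < L * ε := (div_lt_iff₀ hε).mp h1
    rw [div_le_div_iff₀ hLpos two_pos]
    linarith
  -- cube and interior
  set Q : Finset (Fin d → ℤ) := Fintype.piFinset (fun _ => Finset.Ico (0:ℤ) (L:ℤ)) with hQ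
  set I : Finset (Fin d → ℤ) :=
    Fintype.piFinset (fun _ => Finset.Ico ((K:ℤ)) ((L:ℤ) - (K:ℤ))) with hI
  have hIQ : I ⊆ Q := by
    intro n hn
    rw [hQ, Fintype.mem_piFinset]
    rw [hI, Fintype.mem_piFinset] at hn
    intro i
    have h1 := hn i
    simp only [Finset.mem_Ico] at h1 ⊢
    omega
  have hcardQ : Q.card = L ^ d := by
    rw [hQ, Fintype.card_piFinset]
    simp [Int.card_Ico]
  have hcardI : I.card = (L - 2 * K) ^ d := by
    rw [hI, Fintype.card_piFinset]
    have h2 : ((L:ℤ) - (K:ℤ) - (K:ℤ)).toNat = L - 2 * K := by omega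
    simp [Int.card_Ico, h2]
  -- the cube function
  have hLd : (0:ℝ) < (L:ℝ) ^ d := by positivity
  set c : ℝ := Real.sqrt (ν / (L:ℝ) ^ d) with hcdef
  have hc0 : 0 ≤ c := Real.sqrt_nonneg _
  have hc2 : c ^ 2 = ν / (L:ℝ) ^ d := Real.sq_sqrt (by positivity)
  set u : (Fin d → ℤ) → ℂ := fun n => if n ∈ Q then (c:ℂ) else 0 with hu
  have hnormu : ∀ n, ‖u n‖ ^ 2 = if n ∈ Q then c ^ 2 else 0 := by
    intro n; simp only [hu]; split_ifs
    · rw [Complex.norm_real, Real.norm_eq_abs, abs_of_nonneg hc0]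
    · simp
  have humem : MemL2 d u := by
    unfold MemL2
    exact summable_of_ne_finset_zero (s := Q) fun n hn => by rw [hnormu n, if_neg hn]
  have humass : mass d u = ν := by
    unfold mass
    rw [tsum_eq_sum (s := Q) (fun n hn => by rw [hnormu n, if_neg hn]),
      Finset.sum_congr rfl (fun n hn => by rw [hnormu n, if_pos hn]),
      Finset.sum_const, hcardQ, nsmul_eq_mul, hc2]
    push_cast
    field_simp
  refine ⟨u, humem, humass, ?_⟩
  clear_value tailS inS δ K C Q I c u
  -- it remains to bound the energy; since ppot ≥ 0 it suffices to bound the pairing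
  set Fm : (Fin d → ℤ) → (Fin d → ℤ) → ℝ :=
    fun n m => if m = n then 0 else J (latNorm (n - m)) * ‖u n - u m‖ ^ 2 with hFm
  have hpe : pairing d J u = (1/2) * ∑' n, ∑' m, Fm n m := by
    unfold pairing; simp only [hFm]
  have hF_nonneg : ∀ n m, 0 ≤ Fm n m := by
    intro n m; simp only [hFm]; split_ifs
    · exact le_rfl
    · exact mul_nonneg (hJpos _) (sq_nonneg _)
  have hdiff : ∀ n m : Fin d → ℤ, ‖u n - u m‖ ^ 2 ≤ c ^ 2 := by
    intro n m; simp only [hu]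
    split_ifs
    · simp only [sub_self, norm_zero]; nlinarith [sq_nonneg c]
    · rw [sub_zero, Complex.norm_real, Real.norm_eq_abs, abs_of_nonneg hc0]
    · rw [zero_sub, norm_neg, Complex.norm_real, Real.norm_eq_abs, abs_of_nonneg hc0]
    · simp only [sub_self, norm_zero]; nlinarith [sq_nonneg c]
  have hF_le : ∀ n m, Fm n m ≤ c ^ 2 * JbarSummand d J (n - m) := by
    intro n m; simp only [hFm]
    split_ifs with h
    · exact mul_nonneg (sq_nonneg c) (jbarSummand_nonneg hJpos _)
    · rw [JbarSummand, if_neg (sub_ne_zero_of_ne fun e => h e.symm)]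
      calc J (latNorm (n - m)) * ‖u n - u m‖ ^ 2
          ≤ J (latNorm (n - m)) * c ^ 2 :=
            mul_le_mul_of_nonneg_left (hdiff n m) (hJpos _)
        _ = c ^ 2 * J (latNorm (n - m)) := mul_comm _ _
  -- shifted summability
  have hshift_sum : ∀ n : Fin d → ℤ, Summable (fun m => JbarSummand d J (n - m)) := by
    intro n
    have := (Equiv.subLeft n).summable_iff.mpr hJbar
    simpa [Function.comp_def] using this
  have hshift_tail : ∀ n : Fin d → ℤ, Summable (fun m => tailS K (n - m)) := by
    intro n
    have := (Equiv.subLeft n).summable_iff.mpr (htail_sum K)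
    simpa [Function.comp_def] using this
  have hshift_tsum_tail : ∀ n : Fin d → ℤ,
      (∑' m, tailS K (n - m)) = ∑' v, tailS K v := by
    intro n
    have := Equiv.tsum_eq (Equiv.subLeft n) (tailS K)
    simpa using this
  have hshift_tsum_J : ∀ n : Fin d → ℤ,
      (∑' m, JbarSummand d J (n - m)) = Jbar d J := by
    intro n
    have := Equiv.tsum_eq (Equiv.subLeft n) (JbarSummand d J)
    rw [Jbar]
    simpa using this
  have hshift_sum' : ∀ m : Fin d → ℤ, Summable (fun n => JbarSummand d J (n - m)) := by
    intro m
    have := (Equiv.subRight m).summable_iff.mpr hJbar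
    simpa [Function.comp_def] using this
  have hshift_tail' : ∀ m : Fin d → ℤ, Summable (fun n => tailS K (n - m)) := by
    intro m
    have := (Equiv.subRight m).summable_iff.mpr (htail_sum K)
    simpa [Function.comp_def] using this
  have hshift_tsum_tail' : ∀ m : Fin d → ℤ,
      (∑' n, tailS K (n - m)) = ∑' v, tailS K v := by
    intro m
    have := Equiv.tsum_eq (Equiv.subRight m) (tailS K)
    simpa using this
  have hshift_tsum_J' : ∀ m : Fin d → ℤ,
      (∑' n, JbarSummand d J (n - m)) = Jbar d J := by
    intro m
    have := Equiv.tsum_eq (Equiv.subRight m) (JbarSummand d J)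
    rw [Jbar]
    simpa using this
  have hFn_sum : ∀ n, Summable (Fm n) :=
    fun n => Summable.of_nonneg_of_le (hF_nonneg n) (hF_le n)
      ((hshift_sum n).mul_left (c ^ 2))
  -- membership in Q for points near interior points
  have hnatAbs : ∀ (x y : Fin d → ℤ) (i : Fin d), (x i - y i).natAbs ≤ latNorm (x - y) := by
    intro x y i
    have := latNorm_coord_le (x - y) i
    simpa using this
  have hmemQ_of_near : ∀ x y : Fin d → ℤ, x ∈ I → latNorm (x - y) ≤ K → y ∈ Q := by
    intro x y hx hnear
    rw [hQ, Fintype.mem_piFinset]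
    rw [hI, Fintype.mem_piFinset] at hx
    intro i
    have h1 := hx i
    simp only [Finset.mem_Ico] at h1 ⊢
    have h2 : (x i - y i).natAbs ≤ K := le_trans (hnatAbs x y i) hnear
    omega
  have hlatNorm_comm : ∀ x y : Fin d → ℤ, latNorm (x - y) = latNorm (y - x) := by
    intro x y
    unfold latNorm
    refine Finset.sup_congr rfl fun i _ => ?_
    simp only [Pi.sub_apply]
    rw [show x i - y i = -(y i - x i) by ring, Int.natAbs_neg]
  -- interior bound for rows
  have hint_bound : ∀ n, n ∈ I → ∀ m, Fm n m ≤ c ^ 2 * tailS K (n - m) := by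
    intro n hn m
    simp only [hFm]
    split_ifs with h
    · exact mul_nonneg (sq_nonneg c) (htail_nonneg K _)
    · simp only [htailS]
      split_ifs with h2
      · have hmQ : m ∈ Q := hmemQ_of_near n m hn h2
        have hnQ : n ∈ Q := hIQ hn
        simp only [hu, if_pos hnQ, if_pos hmQ, sub_self, norm_zero]
        simp
      · rw [JbarSummand, if_neg (sub_ne_zero_of_ne fun e => h e.symm)]
        calc J (latNorm (n - m)) * ‖u n - u m‖ ^ 2
            ≤ J (latNorm (n - m)) * c ^ 2 :=
              mul_le_mul_of_nonneg_left (hdiff n m) (hJpos _)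
          _ = c ^ 2 * J (latNorm (n - m)) := mul_comm _ _
  have hg_int : ∀ n, n ∈ I → (∑' m, Fm n m) ≤ c ^ 2 * (∑' v, tailS K v) := by
    intro n hn
    calc (∑' m, Fm n m) ≤ ∑' m, c ^ 2 * tailS K (n - m) :=
          Summable.tsum_le_tsum (hint_bound n hn) (hFn_sum n) ((hshift_tail n).mul_left _)
      _ = c ^ 2 * ∑' m, tailS K (n - m) := tsum_mul_left
      _ = c ^ 2 * ∑' v, tailS K v := by rw [hshift_tsum_tail n]
  have hg_all : ∀ n, (∑' m, Fm n m) ≤ c ^ 2 * Jbar d J := by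
    intro n
    calc (∑' m, Fm n m) ≤ ∑' m, c ^ 2 * JbarSummand d J (n - m) :=
          Summable.tsum_le_tsum (hF_le n) (hFn_sum n) ((hshift_sum n).mul_left _)
      _ = c ^ 2 * ∑' m, JbarSummand d J (n - m) := tsum_mul_left
      _ = c ^ 2 * Jbar d J := by rw [hshift_tsum_J n]
  -- rows outside Q are finite sums over Q
  have hg_out : ∀ n, n ∉ Q → (∑' m, Fm n m) = ∑ m ∈ Q, c ^ 2 * J (latNorm (n - m)) := by
    intro n hn
    rw [tsum_eq_sum (s := Q) (f := Fm n) ?_]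
    · refine Finset.sum_congr rfl fun m hm => ?_
      have hmn : ¬ m = n := fun e => hn (e ▸ hm)
      simp only [hFm, if_neg hmn, hu, if_neg hn, if_pos hm, zero_sub, norm_neg,
        Complex.norm_real, Real.norm_eq_abs, abs_of_nonneg hc0]
      ring
    · intro m hm
      simp only [hFm]
      split_ifs with h
      · rfl
      · simp only [hu, if_neg hn, if_neg hm, sub_self, norm_zero]
        ring
  -- split the outer sum
  set f' : (Fin d → ℤ) → (Fin d → ℤ) → ℝ :=
    fun m n => if n ∈ Q then 0 else c ^ 2 * J (latNorm (n - m)) with hf'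
  set g1 : (Fin d → ℤ) → ℝ := fun n => if n ∈ Q then (∑' m, Fm n m) else 0 with hg1
  set g2 : (Fin d → ℤ) → ℝ := fun n => ∑ m ∈ Q, f' m n with hg2
  have hf'_nonneg : ∀ m n, 0 ≤ f' m n := by
    intro m n; simp only [hf']; split_ifs
    · exact le_rfl
    · exact mul_nonneg (sq_nonneg c) (hJpos _)
  have hf'_le : ∀ m, m ∈ Q → ∀ n, f' m n ≤ c ^ 2 * JbarSummand d J (n - m) := by
    intro m hm n; simp only [hf']
    split_ifs with h
    · exact mul_nonneg (sq_nonneg c) (jbarSummand_nonneg hJpos _)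
    · rw [JbarSummand, if_neg (sub_ne_zero_of_ne fun e : n = m => h (by rw [e]; exact hm))]
  have hf'_sum : ∀ m, m ∈ Q → Summable (f' m) :=
    fun m hm => Summable.of_nonneg_of_le (hf'_nonneg m) (hf'_le m hm)
      ((hshift_sum' m).mul_left _)
  have hsplit : ∀ n, (∑' m, Fm n m) = g1 n + g2 n := by
    intro n
    by_cases hn : n ∈ Q
    · simp only [hg1, hg2, hf', if_pos hn, Finset.sum_const_zero, add_zero]
    · simp only [hg1, hg2, hf', if_neg hn, zero_add]
      exact hg_out n hn
  have hg1_sum : Summable g1 :=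
    summable_of_ne_finset_zero (s := Q) fun n hn => by simp only [hg1, if_neg hn]
  have hg2_sum : Summable g2 := by
    rw [hg2]
    exact summable_sum fun m hm => hf'_sum m hm
  -- column bounds
  have hg2_int : ∀ m, m ∈ I → (∑' n, f' m n) ≤ c ^ 2 * (∑' v, tailS K v) := by
    intro m hm
    have hb : ∀ n, f' m n ≤ c ^ 2 * tailS K (n - m) := by
      intro n
      simp only [hf']
      split_ifs with h
      · exact mul_nonneg (sq_nonneg c) (htail_nonneg K _)
      · simp only [htailS]
        split_ifs with h2
        · exact absurd (hmemQ_of_near m n hm (by rwa [hlatNorm_comm m n])) h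
        · rw [JbarSummand,
            if_neg (sub_ne_zero_of_ne fun e : n = m => h (by rw [e]; exact hIQ hm))]
    calc (∑' n, f' m n) ≤ ∑' n, c ^ 2 * tailS K (n - m) :=
          Summable.tsum_le_tsum hb (hf'_sum m (hIQ hm)) ((hshift_tail' m).mul_left _)
      _ = c ^ 2 * ∑' n, tailS K (n - m) := tsum_mul_left
      _ = c ^ 2 * ∑' v, tailS K v := by rw [hshift_tsum_tail' m]
  have hg2_all : ∀ m, m ∈ Q → (∑' n, f' m n) ≤ c ^ 2 * Jbar d J := by
    intro m hm
    calc (∑' n, f' m n) ≤ ∑' n, c ^ 2 * JbarSummand d J (n - m) :=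
          Summable.tsum_le_tsum (hf'_le m hm) (hf'_sum m hm) ((hshift_sum' m).mul_left _)
      _ = c ^ 2 * ∑' n, JbarSummand d J (n - m) := tsum_mul_left
      _ = c ^ 2 * Jbar d J := by rw [hshift_tsum_J' m]
  -- sum bounds
  set T : ℝ := ∑' v, tailS K v with hT
  clear_value Fm f' g1 g2 T
  have hb1 : (∑' n, g1 n) ≤
      ((Q \ I).card : ℝ) * (c ^ 2 * Jbar d J) + (I.card : ℝ) * (c ^ 2 * T) := by
    rw [tsum_eq_sum (s := Q) (fun n hn => by simp only [hg1, if_neg hn]),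
      ← Finset.sum_sdiff hIQ]
    refine add_le_add ?_ ?_
    · calc ∑ n ∈ Q \ I, g1 n ≤ ∑ _n ∈ Q \ I, c ^ 2 * Jbar d J := by
            refine Finset.sum_le_sum fun n _ => ?_
            simp only [hg1]
            split_ifs with h
            · exact hg_all n
            · exact mul_nonneg (sq_nonneg c) hJb
        _ = ((Q \ I).card : ℝ) * (c ^ 2 * Jbar d J) := by
            rw [Finset.sum_const, nsmul_eq_mul]
    · calc ∑ n ∈ I, g1 n ≤ ∑ n ∈ I, c ^ 2 * T := by
            refine Finset.sum_le_sum fun n hn => ?_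
            simp only [hg1, if_pos (hIQ hn)]
            exact hg_int n hn
        _ = (I.card : ℝ) * (c ^ 2 * T) := by rw [Finset.sum_const, nsmul_eq_mul]
  have hb2 : (∑' n, g2 n) ≤
      ((Q \ I).card : ℝ) * (c ^ 2 * Jbar d J) + (I.card : ℝ) * (c ^ 2 * T) := by
    rw [hg2, Summable.tsum_finsetSum (fun m hm => hf'_sum m hm), ← Finset.sum_sdiff hIQ]
    refine add_le_add ?_ ?_
    · calc ∑ m ∈ Q \ I, (∑' n, f' m n) ≤ ∑ _m ∈ Q \ I, c ^ 2 * Jbar d J :=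
            Finset.sum_le_sum fun m hm => hg2_all m (Finset.mem_sdiff.mp hm).1
        _ = ((Q \ I).card : ℝ) * (c ^ 2 * Jbar d J) := by
            rw [Finset.sum_const, nsmul_eq_mul]
    · calc ∑ m ∈ I, (∑' n, f' m n) ≤ ∑ _m ∈ I, c ^ 2 * T :=
            Finset.sum_le_sum fun m hm => hg2_int m hm
        _ = (I.card : ℝ) * (c ^ 2 * T) := by rw [Finset.sum_const, nsmul_eq_mul]
  have hsum_split : (∑' n, ∑' m, Fm n m) = (∑' n, g1 n) + (∑' n, g2 n) := by
    rw [← Summable.tsum_add hg1_sum hg2_sum]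
    exact tsum_congr hsplit
  -- cardinality bound
  have hcard_bound : ((Q \ I).card : ℝ) ≤ (d:ℝ) * (2 * (K:ℝ)) * (L:ℝ) ^ (d - 1) := by
    have hIcard_le : I.card ≤ Q.card := Finset.card_le_card hIQ
    have h1 : (Q \ I).card = Q.card - I.card := Finset.card_sdiff_of_subset hIQ
    have h2 : ((Q \ I).card : ℝ) = (L:ℝ) ^ d - ((L - 2 * K : ℕ) : ℝ) ^ d := by
      rw [h1, Nat.cast_sub hIcard_le, hcardQ, hcardI]
      push_cast
      ring
    have hBL : ((L - 2 * K : ℕ) : ℝ) ≤ (L:ℝ) := by exact_mod_cast Nat.sub_le L (2 * K)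
    have hB0 : (0:ℝ) ≤ ((L - 2 * K : ℕ) : ℝ) := Nat.cast_nonneg _
    have hLK : (L:ℝ) - ((L - 2 * K : ℕ) : ℝ) = 2 * (K:ℝ) := by
      have h3 : ((L - 2 * K : ℕ) : ℝ) = (L:ℝ) - 2 * (K:ℝ) := by
        rw [Nat.cast_sub h2K]; push_cast; ring
      rw [h3]; ring
    obtain ⟨e, he⟩ : ∃ e, d = e + 1 := ⟨d - 1, by omega⟩
    have key := pow_sub_pow_le_aux e hB0 hBL
    rw [h2, he]
    have he1 : e + 1 - 1 = e := by omega
    rw [he1]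
    calc (L:ℝ) ^ (e + 1) - ((L - 2 * K : ℕ) : ℝ) ^ (e + 1)
        ≤ ((e:ℝ) + 1) * ((L:ℝ) - ((L - 2 * K : ℕ) : ℝ)) * (L:ℝ) ^ e := key
      _ = ((e:ℝ) + 1) * (2 * (K:ℝ)) * (L:ℝ) ^ e := by rw [hLK]
      _ = ((e + 1 : ℕ):ℝ) * (2 * (K:ℝ)) * (L:ℝ) ^ e := by push_cast; ring
  -- numeric assembly
  have hLne : (L:ℝ) ≠ 0 := ne_of_gt hLpos
  have hLdpow : (L:ℝ) ^ d = (L:ℝ) ^ (d - 1) * (L:ℝ) := by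
    conv_lhs => rw [show d = (d - 1) + 1 by omega]
    rw [pow_succ]
  have e1 : ((Q \ I).card : ℝ) * (c ^ 2 * Jbar d J) ≤ ε / 2 := by
    have step1 : ((Q \ I).card : ℝ) * (c ^ 2 * Jbar d J)
        ≤ ((d:ℝ) * (2 * (K:ℝ)) * (L:ℝ) ^ (d - 1)) * (c ^ 2 * Jbar d J) :=
      mul_le_mul_of_nonneg_right hcard_bound (mul_nonneg (sq_nonneg c) hJb)
    have step2 : ((d:ℝ) * (2 * (K:ℝ)) * (L:ℝ) ^ (d - 1)) * (c ^ 2 * Jbar d J) = C / L := by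
      rw [hc2, hC, hLdpow]
      have hLd1 : (L:ℝ) ^ (d - 1) ≠ 0 := by positivity
      field_simp
    linarith [hCL]
  have e2 : (I.card : ℝ) * (c ^ 2 * T) ≤ ε / 2 := by
    have hIcard : (I.card : ℝ) ≤ (L:ℝ) ^ d := by
      have h3 : I.card ≤ Q.card := Finset.card_le_card hIQ
      rw [hcardQ] at h3
      exact_mod_cast h3
    have step1 : (I.card : ℝ) * (c ^ 2 * T) ≤ (L:ℝ) ^ d * (c ^ 2 * T) :=
      mul_le_mul_of_nonneg_right hIcard (mul_nonneg (sq_nonneg c) hTnn)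
    have step2 : (L:ℝ) ^ d * (c ^ 2 * T) = ν * T := by
      rw [hc2]
      field_simp
    have step3 : ν * T ≤ ν * δ := mul_le_mul_of_nonneg_left hTK.le hν.le
    have step4 : ν * δ = ε / 2 := by
      rw [hδ]; field_simp
    linarith
  have hpair : pairing d J u ≤ ε := by
    rw [hpe, hsum_split]
    linarith [hb1, hb2]
  have hppot : 0 ≤ ppot d p u := ppot_nonneg u
  have hpair0 : 0 ≤ pairing d J u := pairing_nonneg hJpos u
  unfold energy
  have hfrac : (0:ℝ) ≤ 1/(p+1) := by positivity
  have h9 : (0:ℝ) ≤ (1/(p+1)) * ppot d p u := mul_nonneg hfrac hppot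
  linarith
theorem stmt1 (d : ℕ) (hd : 1 ≤ d) (p : ℝ) (hp : 1 < p) (J : ℕ → ℝ)
    (hJpos : ∀ k, 0 ≤ J k) (hJbar : Summable (JbarSummand d J))
    (ν : ℝ) (hν : 0 < ν) :
    Ifun d J p ν = 0 ↔
      ∀ q : (Fin d → ℤ) → ℂ, MemL2 d q →
        ppot d p q ≤ ((p + 1) / 2) * ν ^ (-(p - 1) / 2) * (mass d q) ^ ((p - 1) / 2) *
          pairing d J q := by
  have hbdd := energy_bddBelow (d := d) (J := J) hp hJpos ν
  have hp1 : (0:ℝ) < p + 1 := by linarith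
  constructor
  · -- Ifun = 0 → inequality
    intro h0 q hq
    rcases eq_or_lt_of_le (mass_nonneg (d := d) q) with hμ0 | hμ
    · -- mass q = 0 : q ≡ 0
      have hz : ∀ n, q n = 0 := by
        intro n
        have h1 : ‖q n‖ ^ 2 ≤ mass d q := Summable.le_tsum hq n fun j _ => sq_nonneg _
        rw [← hμ0] at h1
        have := sq_nonneg ‖q n‖
        have h2 : ‖q n‖ ^ 2 = 0 := le_antisymm h1 this
        have h3 : ‖q n‖ = 0 := by
          exact pow_eq_zero_iff (n := 2) (by norm_num) |>.mp h2
        exact norm_eq_zero.mp h3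
      have hV : ppot d p q = 0 := by
        unfold ppot
        convert tsum_zero with n
        rw [hz n, norm_zero, Real.zero_rpow (by linarith)]
      have hm0 : mass d q = 0 := hμ0.symm
      rw [hV, hm0, Real.zero_rpow (ne_of_gt (by linarith : (0:ℝ) < (p-1)/2))]
      simp
    · -- mass q = μ > 0
      set μ := mass d q with hμdef
      set t : ℝ := ν / μ with htdef
      have ht : 0 < t := div_pos hν hμ
      set c : ℝ := Real.sqrt t with hcdef
      have hc : 0 ≤ c := Real.sqrt_nonneg _
      have hc2 : c ^ 2 = t := Real.sq_sqrt ht.le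
      have hcp : c ^ (p + 1) = t ^ ((p + 1) / 2) := by
        rw [hcdef, Real.sqrt_eq_rpow, ← Real.rpow_mul ht.le]
        congr 1; ring
      set q' : (Fin d → ℤ) → ℂ := fun n => (c:ℂ) * q n with hq'def
      have hmem : MemL2 d q' := memL2_smul c hc q hq
      have hmass : mass d q' = ν := by
        rw [hq'def, mass_smul c hc q, hc2, htdef, div_mul_cancel₀ _ hμ.ne']
      have hmemS : energy d J p q' ∈
          {x : ℝ | ∃ q, MemL2 d q ∧ mass d q = ν ∧ energy d J p q = x} :=
        ⟨q', hmem, hmass, rfl⟩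
      have hE : 0 ≤ energy d J p q' := by
        have hI : Ifun d J p ν ≤ energy d J p q' := csInf_le hbdd hmemS
        rw [h0] at hI
        exact hI
      rw [hq'def] at hE
      unfold energy at hE
      rw [pairing_smul c hc q, ppot_smul c hc q, hc2, hcp] at hE
      -- hE : 0 ≤ 1/2 * (t * pairing) - 1/(p+1) * (t^((p+1)/2) * ppot)
      set P := pairing d J q
      set V := ppot d p q
      set A : ℝ := t ^ ((p + 1) / 2) with hAdef
      have hA : 0 < A := Real.rpow_pos_of_pos ht _
      set D : ℝ := ν ^ (-(p - 1) / 2) * μ ^ ((p - 1) / 2) with hDdef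
      have hAD : A * D = t := by
        rw [hAdef, hDdef, htdef, Real.div_rpow hν.le hμ.le]
        have e1 : ν ^ ((p+1)/2) * ν ^ (-(p-1)/2) = ν := by
          rw [← Real.rpow_add hν, show (p+1)/2 + -(p-1)/2 = 1 by ring, Real.rpow_one]
        have e2 : μ ^ ((p-1)/2) / μ ^ ((p+1)/2) = μ⁻¹ := by
          rw [← Real.rpow_sub hμ, show (p-1)/2 - (p+1)/2 = -1 by ring, Real.rpow_neg_one]
        calc ν ^ ((p+1)/2) / μ ^ ((p+1)/2) * (ν ^ (-(p-1)/2) * μ ^ ((p-1)/2))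
            = (ν ^ ((p+1)/2) * ν ^ (-(p-1)/2)) * (μ ^ ((p-1)/2) / μ ^ ((p+1)/2)) := by
              ring
          _ = ν * μ⁻¹ := by rw [e1, e2]
          _ = ν / μ := (div_eq_mul_inv _ _).symm
      have goal' : A * V ≤ A * (((p + 1) / 2) * D * P) := by
        have h5 : (1/(p+1)) * (A * V) ≤ 1/2 * (t * P) := by linarith
        have h6 : A * V ≤ (p+1)/2 * (t * P) := by
          have := mul_le_mul_of_nonneg_left h5 hp1.le
          rw [mul_comm] at this
          calc A * V = (p+1) * ((1/(p+1)) * (A * V)) := by field_simp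
            _ ≤ (p+1) * (1/2 * (t * P)) := by nlinarith
            _ = (p+1)/2 * (t * P) := by ring
        calc A * V ≤ (p+1)/2 * (t * P) := h6
          _ = A * (((p + 1) / 2) * D * P) := by rw [← hAD]; ring
      have := le_of_mul_le_mul_left goal' hA
      calc V ≤ ((p + 1) / 2) * D * P := this
        _ = (p + 1) / 2 * ν ^ (-(p - 1) / 2) * μ ^ ((p - 1) / 2) * P := by
          rw [hDdef]; ring
  · -- inequality → Ifun = 0
    intro h
    have hS1 : ∀ ε : ℝ, 0 < ε → Ifun d J p ν ≤ ε := by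
      intro ε hε
      obtain ⟨q, hq, hm, hEq⟩ := exists_small_energy d hd p hp J hJpos hJbar ν hν hε
      exact le_trans (csInf_le hbdd ⟨q, hq, hm, rfl⟩) hEq
    have hle : Ifun d J p ν ≤ 0 := by
      have := le_of_forall_pos_le_add (a := Ifun d J p ν) (b := 0) ?_
      · exact this
      · intro ε hε; simpa using hS1 ε hε
    have hge : 0 ≤ Ifun d J p ν := by
      obtain ⟨q0, hq0, hm0, hE0⟩ := exists_small_energy d hd p hp J hJpos hJbar ν hν
        (ε := 1) one_pos
      refine le_csInf ⟨energy d J p q0, q0, hq0, hm0, rfl⟩ ?_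
      rintro x ⟨q, hq, hm, rfl⟩
      have hineq := h q hq
      rw [hm] at hineq
      have h1 : ν ^ (-(p - 1) / 2) * ν ^ ((p - 1) / 2) = 1 := by
        rw [← Real.rpow_add hν, show -(p-1)/2 + (p-1)/2 = 0 by ring, Real.rpow_zero]
      have h2 : ppot d p q ≤ (p + 1) / 2 * pairing d J q := by
        calc ppot d p q ≤ (p + 1) / 2 * ν ^ (-(p - 1) / 2) * ν ^ ((p - 1) / 2) *
              pairing d J q := hineq
          _ = (p + 1) / 2 * (ν ^ (-(p - 1) / 2) * ν ^ ((p - 1) / 2)) * pairing d J q := by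
              ring
          _ = (p + 1) / 2 * pairing d J q := by rw [h1, mul_one]
      unfold energy
      have h3 : (1/(p+1)) * ppot d p q ≤ (1/(p+1)) * ((p + 1) / 2 * pairing d J q) :=
        mul_le_mul_of_nonneg_left h2 (by positivity)
      have h4 : (1/(p+1)) * ((p + 1) / 2 * pairing d J q) = 1/2 * pairing d J q := by
        field_simp
      linarith
    linarith
end
end

section
/- Assume J̄ < ∞ and that J is of order α ∈ (0,∞). Let q ∈ ℓ²(Z^d) have nonnegative entries, q ≠ 0, and satisfy −ω q_n = (Lq)_n − (q_n)^p for all n ∈ Z^d, for some ω > 0. Then for every ε > 0 there is no constant C > 0 with q_n ≤ C (1 + |n|)^{−(d+α+ε)} for all n ∈ Z^d; that is, the decay rate d+α is sharp. -/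
open scoped BigOperators
open Filter Topology

noncomputable section

/-- The operator `L` applied to a real-valued sequence:
`(Lq)_n = Σ_{m ≠ n} J_{|n-m|} (q_n - q_m)`. -/
def LopR (d : ℕ) (J : ℕ → ℝ) (q : (Fin d → ℤ) → ℝ) (n : Fin d → ℤ) : ℝ :=
  ∑' m : Fin d → ℤ, if m = n then 0 else J (latNorm (n - m)) * (q n - q m)

theorem stmt4 (d : ℕ) (hd : 1 ≤ d) (p : ℝ) (hp : 1 < p) (J : ℕ → ℝ)
    (hJpos : ∀ k, 0 ≤ J k) (hJbar : Summable (JbarSummand d J))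
    (α : ℝ) (hα : 0 < α)
    (horder : ∃ A : ℝ, 0 < A ∧
      Tendsto (fun k : ℕ => (k : ℝ) ^ ((d : ℝ) + α) * J k) atTop (𝓝 A))
    (q : (Fin d → ℤ) → ℝ) (hqpos : ∀ n, 0 ≤ q n) (hqne : q ≠ 0)
    (hqL2 : Summable fun n : Fin d → ℤ => q n ^ 2)
    (ω : ℝ) (hω : 0 < ω)
    (heig : ∀ n, -ω * q n = LopR d J q n - q n ^ p) :
    ∀ ε : ℝ, 0 < ε →
      ¬ ∃ C : ℝ, 0 < C ∧ ∀ n : Fin d → ℤ,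
        q n ≤ C * (1 + (latNorm n : ℝ)) ^ (-((d : ℝ) + α + ε)) := by
  intro ε hε
  rintro ⟨C, hC, hdecay⟩
  set s : ℝ := (d : ℝ) + α + ε with hs
  have hspos : 0 < s := by positivity
  obtain ⟨A, hA, hlim⟩ := horder
  obtain ⟨n0, hn0⟩ : ∃ n, q n ≠ 0 := Function.ne_iff.mp hqne
  have hq0 : 0 < q n0 := (hqpos n0).lt_of_ne (Ne.symm hn0)
  -- q is bounded by C
  have hqbd : ∀ n, q n ≤ C := by
    intro n
    refine (hdecay n).trans ?_
    have h1 : (1 : ℝ) ≤ 1 + (latNorm n : ℝ) := by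
      have := Nat.cast_nonneg (α := ℝ) (latNorm n); linarith
    have := Real.rpow_le_one_of_one_le_of_nonpos h1 (neg_nonpos.mpr hspos.le)
    nlinarith
  have hJS_nonneg : ∀ m : Fin d → ℤ, 0 ≤ JbarSummand d J m := by
    intro m; unfold JbarSummand; split
    · exact le_refl 0
    · exact hJpos _
  have hJbar_nonneg : 0 ≤ Jbar d J := tsum_nonneg hJS_nonneg
  -- key pointwise inequality
  have key : ∀ n m0 : Fin d → ℤ, m0 ≠ n →
      J (latNorm (n - m0)) * q m0 ≤ (Jbar d J + ω) * q n := by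
    intro n m0 hm0
    have hshift : Summable (fun m => JbarSummand d J (n - m)) :=
      hJbar.comp_injective sub_right_injective
    have hg2 : Summable (fun m => JbarSummand d J (n - m) * q m) := by
      refine Summable.of_nonneg_of_le
        (fun m => mul_nonneg (hJS_nonneg _) (hqpos m))
        (fun m => mul_le_mul_of_nonneg_left (hqbd m) (hJS_nonneg _))
        (hshift.mul_right C)
    have hg1 : Summable (fun m => JbarSummand d J (n - m) * q n) := hshift.mul_right _
    have hL : LopR d J q n = Jbar d J * q n - ∑' m, JbarSummand d J (n - m) * q m := by
      unfold LopR
      have hfe : ∀ m, (if m = n then 0 else J (latNorm (n - m)) * (q n - q m))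
          = JbarSummand d J (n - m) * q n - JbarSummand d J (n - m) * q m := by
        intro m
        by_cases h : m = n
        · subst h; simp [JbarSummand]
        · rw [if_neg h]
          have hnm : n - m ≠ 0 := sub_ne_zero.mpr (Ne.symm h)
          rw [JbarSummand, if_neg hnm]; ring
      have ht : ∑' (x : Fin d → ℤ), JbarSummand d J (n - x) = Jbar d J := by
        rw [Jbar]
        simpa using (Equiv.subLeft n).tsum_eq (JbarSummand d J)
      rw [tsum_congr hfe, Summable.tsum_sub hg1 hg2, tsum_mul_right, ht]
    have hS : ∑' m, JbarSummand d J (n - m) * q m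
        = Jbar d J * q n + ω * q n - q n ^ p := by
      have h := heig n; rw [hL] at h; linarith
    have hsingle : JbarSummand d J (n - m0) * q m0 ≤ ∑' m, JbarSummand d J (n - m) * q m :=
      Summable.le_tsum hg2 m0 (fun m _ => mul_nonneg (hJS_nonneg _) (hqpos m))
    have hqp : 0 ≤ q n ^ p := Real.rpow_nonneg (hqpos n) p
    have hJb : JbarSummand d J (n - m0) = J (latNorm (n - m0)) := by
      rw [JbarSummand, if_neg (sub_ne_zero.mpr (Ne.symm hm0))]
    rw [hJb] at hsingle
    rw [hS] at hsingle
    nlinarith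
  -- the lattice direction
  have hd0 : 0 < d := hd
  set i0 : Fin d := ⟨0, hd0⟩ with hi0
  set N0 : ℕ := latNorm n0 with hN0
  set nk : ℕ → (Fin d → ℤ) := fun k i => n0 i + if i = i0 then (k : ℤ) else 0 with hnk
  have hlat : ∀ k : ℕ, latNorm (nk k - n0) = k := by
    intro k
    apply le_antisymm
    · apply Finset.sup_le; intro i _
      simp only [Pi.sub_apply, hnk]
      by_cases h : i = i0 <;> simp [h]
    · have he : ((nk k - n0) i0).natAbs = k := by simp [hnk]
      have h := Finset.le_sup (f := fun i => ((nk k - n0) i).natAbs) (Finset.mem_univ i0)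
      beta_reduce at h
      rw [he] at h
      exact h
  have hne : ∀ k : ℕ, 1 ≤ k → n0 ≠ nk k := by
    intro k hk h
    have h2 := congrFun h i0
    simp [hnk] at h2
    omega
  have hlow : ∀ k : ℕ, (k : ℝ) - (N0 : ℝ) ≤ (latNorm (nk k) : ℝ) := by
    intro k
    have h1 : (n0 i0).natAbs ≤ N0 :=
      Finset.le_sup (f := fun i => (n0 i).natAbs) (Finset.mem_univ i0)
    have h2 : (nk k i0).natAbs ≤ latNorm (nk k) :=
      Finset.le_sup (f := fun i => (nk k i).natAbs) (Finset.mem_univ i0)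
    have hv : nk k i0 = n0 i0 + (k : ℤ) := by simp [hnk]
    have h3 : k ≤ (n0 i0 + (k : ℤ)).natAbs + (n0 i0).natAbs := by omega
    have h2' : (n0 i0 + (k : ℤ)).natAbs ≤ latNorm (nk k) := by rw [← hv]; exact h2
    have h4 : k ≤ latNorm (nk k) + N0 := by omega
    have := Nat.cast_le (α := ℝ).mpr h4
    push_cast at this ⊢
    linarith
  -- main chain
  set K : ℝ := (Jbar d J + ω) * C with hK
  have hKpos : 0 < K := mul_pos (by linarith) hC
  have chain : ∀ k : ℕ, N0 + 1 ≤ k →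
      J k * q n0 ≤ K * (1 + ((k : ℝ) - (N0 : ℝ))) ^ (-s) := by
    intro k hk
    have h1 : J (latNorm (nk k - n0)) * q n0 ≤ (Jbar d J + ω) * q (nk k) :=
      key (nk k) n0 (hne k (by omega))
    rw [hlat k] at h1
    have h2 : q (nk k) ≤ C * (1 + (latNorm (nk k) : ℝ)) ^ (-s) := hdecay _
    have hbase : (0 : ℝ) < 1 + ((k : ℝ) - (N0 : ℝ)) := by
      have : (N0 : ℝ) + 1 ≤ (k : ℝ) := by exact_mod_cast Nat.cast_le.mpr hk
      linarith
    have h3 : (1 + (latNorm (nk k) : ℝ)) ^ (-s) ≤ (1 + ((k : ℝ) - (N0 : ℝ))) ^ (-s) :=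
      Real.rpow_le_rpow_of_nonpos hbase (by linarith [hlow k]) (neg_nonpos.mpr hspos.le)
    have h4 : q (nk k) ≤ C * (1 + ((k : ℝ) - (N0 : ℝ))) ^ (-s) :=
      h2.trans (mul_le_mul_of_nonneg_left h3 hC.le)
    calc J k * q n0 ≤ (Jbar d J + ω) * q (nk k) := h1
      _ ≤ (Jbar d J + ω) * (C * (1 + ((k : ℝ) - (N0 : ℝ))) ^ (-s)) :=
          mul_le_mul_of_nonneg_left h4 (by linarith)
      _ = K * (1 + ((k : ℝ) - (N0 : ℝ))) ^ (-s) := by rw [hK]; ring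
  -- multiply by k^(d+α) and pass to the limit
  set da : ℝ := (d : ℝ) + α with hda
  have hev : ∀ᶠ k : ℕ in atTop, ((k : ℝ) ^ da * J k) * q n0 ≤ (K * 2 ^ s) * (k : ℝ) ^ (-ε) := by
    filter_upwards [eventually_ge_atTop (2 * N0 + 2)] with k hk
    have hk1 : N0 + 1 ≤ k := by omega
    have hkR : (2 : ℝ) * (N0 : ℝ) + 2 ≤ (k : ℝ) := by exact_mod_cast Nat.cast_le.mpr hk
    have hkpos : (0 : ℝ) < (k : ℝ) := by
      have : (0:ℝ) ≤ (N0:ℝ) := Nat.cast_nonneg _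
      linarith
    have hhalf : (k : ℝ) / 2 ≤ 1 + ((k : ℝ) - (N0 : ℝ)) := by linarith
    have hhalfpos : (0 : ℝ) < (k : ℝ) / 2 := by linarith
    have h5 : (1 + ((k : ℝ) - (N0 : ℝ))) ^ (-s) ≤ ((k : ℝ) / 2) ^ (-s) :=
      Real.rpow_le_rpow_of_nonpos hhalfpos hhalf (neg_nonpos.mpr hspos.le)
    have h6 : J k * q n0 ≤ K * ((k : ℝ) / 2) ^ (-s) :=
      (chain k hk1).trans (mul_le_mul_of_nonneg_left h5 hKpos.le)
    have h7 : ((k : ℝ) / 2) ^ (-s) = (k : ℝ) ^ (-s) * 2 ^ s := by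
      rw [Real.div_rpow hkpos.le (by norm_num : (0:ℝ) ≤ 2),
        Real.rpow_neg (by norm_num : (0:ℝ) ≤ 2), div_eq_mul_inv, inv_inv]
    have h8 : (k : ℝ) ^ da * (k : ℝ) ^ (-s) = (k : ℝ) ^ (-ε) := by
      rw [← Real.rpow_add hkpos]
      congr 1
      rw [hs, hda]; ring
    have h9 : ((k : ℝ) ^ da * J k) * q n0 ≤ (k : ℝ) ^ da * (K * ((k : ℝ) / 2) ^ (-s)) := by
      have hkda : (0 : ℝ) ≤ (k : ℝ) ^ da := Real.rpow_nonneg hkpos.le da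
      calc ((k : ℝ) ^ da * J k) * q n0 = (k : ℝ) ^ da * (J k * q n0) := by ring
        _ ≤ (k : ℝ) ^ da * (K * ((k : ℝ) / 2) ^ (-s)) :=
            mul_le_mul_of_nonneg_left h6 hkda
    calc ((k : ℝ) ^ da * J k) * q n0 ≤ (k : ℝ) ^ da * (K * ((k : ℝ) / 2) ^ (-s)) := h9
      _ = (K * 2 ^ s) * ((k : ℝ) ^ da * (k : ℝ) ^ (-s)) := by rw [h7]; ring
      _ = (K * 2 ^ s) * (k : ℝ) ^ (-ε) := by rw [h8]
  have hf : Tendsto (fun k : ℕ => ((k : ℝ) ^ da * J k) * q n0) atTop (𝓝 (A * q n0)) :=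
    hlim.mul_const (q n0)
  have hg : Tendsto (fun k : ℕ => (K * 2 ^ s) * (k : ℝ) ^ (-ε)) atTop (𝓝 0) := by
    have h0 : Tendsto (fun k : ℕ => (k : ℝ) ^ (-ε)) atTop (𝓝 0) :=
      (tendsto_rpow_neg_atTop hε).comp tendsto_natCast_atTop_atTop
    have := h0.const_mul (K * 2 ^ s)
    simpa using this
  have hle : A * q n0 ≤ 0 := le_of_tendsto_of_tendsto hf hg hev
  nlinarith
end
end
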